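/- Every integral domain of Krull dimension at most one (i.e. an integral domain in which every nonzero prime ideal is maximal) satisfies property (+). -/

import Mathlib

/-!
Common setup: `Λ` is an index set, `D λ` a family of commutative rings,
`R = ∏ λ, D λ` the product ring, and
`B = ∏ λ, P(max (D λ))` the product Boolean algebra of the power sets of the
sets of maximal ideals, realized as the Pi type `∀ l, Set (MaximalSpectrum (D l))`
with its componentwise Boolean algebra structure (meet = componentwise ∩,
join = componentwise ∪, `⊥ = (∅)_λ`, complement componentwise, order = componentwise ⊆).
-/

variable {Λ : Type*} {D : Λ → Type*}

/-- `S(a) = (V(a_λ))_λ ∈ B`, where `V(x)` is the set of maximal ideals containing `x`. -/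
def SFam [∀ l, CommRing (D l)] (a : ∀ l, D l) : ∀ l, Set (MaximalSpectrum (D l)) :=
  fun l => {P | a l ∈ P.asIdeal}

/-- `z(x) = {λ | x_λ = 0}`. -/
def ZFam [∀ l, CommRing (D l)] (x : ∀ l, D l) : Set Λ := {l | x l = 0}

/-- A filter in a Boolean algebra: a nonempty subset not containing `⊥`, closed
under meets, and upward closed. -/
def IsBFilter {B : Type*} [BooleanAlgebra B] (U : Set B) : Prop :=
  U.Nonempty ∧ ⊥ ∉ U ∧ (∀ X ∈ U, ∀ Y ∈ U, X ⊓ Y ∈ U) ∧ (∀ Y ∈ U, ∀ Z, Y ≤ Z → Z ∈ U)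

/-- An ultrafilter in a Boolean algebra: a filter containing `Y` or `Yᶜ` for every `Y`. -/
def IsBUltrafilter {B : Type*} [BooleanAlgebra B] (U : Set B) : Prop :=
  IsBFilter U ∧ ∀ Y, Y ∈ U ∨ Yᶜ ∈ U

/-- Property (+): for all `r` and all nonzero `a` there is `d` lying in every maximal
ideal containing `a` but not `r`, and in no maximal ideal containing `r`. -/
def PropertyPlus (A : Type*) [CommRing A] : Prop :=
  ∀ r a : A, a ≠ 0 → ∃ d : A,
    (∀ M : Ideal A, M.IsMaximal → a ∈ M → r ∉ M → d ∈ M) ∧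
    (∀ M : Ideal A, M.IsMaximal → r ∈ M → d ∉ M)

/-- Property (++): for every `r` there is `d` with `D(r) = V(d)`, i.e. the maximal
ideals containing `d` are exactly those not containing `r`. -/
def PropertyPlusPlus (A : Type*) [CommRing A] : Prop :=
  ∀ r : A, ∃ d : A, ∀ P : MaximalSpectrum A, d ∈ P.asIdeal ↔ r ∉ P.asIdeal

/-- Every integral domain of Krull dimension at most one (every nonzero prime ideal is
maximal) satisfies property (+). -/
theorem key (A : Type*) [CommRing A] [IsDomain A]
    (hdim : ∀ P : Ideal A, P.IsPrime → P ≠ ⊥ → P.IsMaximal)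
    (r a : A) (ha : a ≠ 0) :
    ∃ n y, r ^ (n+1) * (1 - r * y) ∈ Ideal.span {a} := by
  by_cases hr : r = 0
  · exact ⟨0, 0, by simp [hr]⟩
  set S : Submonoid A :=
    { carrier := {x | ∃ n y, x = r ^ n * (1 - r * y)}
      mul_mem' := by
        rintro _ _ ⟨n, y, rfl⟩ ⟨m, z, rfl⟩
        exact ⟨n + m, y + z - r * y * z, by ring⟩
      one_mem' := ⟨0, 0, by ring⟩ } with hS
  by_contra h
  push_neg at h
  have hdisj : Disjoint ((Ideal.span {a} : Ideal A) : Set A) (S : Set A) := by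
    rw [Set.disjoint_left]
    rintro x hx ⟨n, y, rfl⟩
    rcases Nat.eq_zero_or_pos n with hn | hn
    · exact h 0 y (by simpa [hn] using Ideal.mul_mem_left _ r hx)
    · obtain ⟨k, rfl⟩ := Nat.exists_eq_add_of_le hn
      exact h k y (by convert (SetLike.mem_coe.mp hx) using 2; ring)
  obtain ⟨P, hP, hle, hPd⟩ := Ideal.exists_le_prime_disjoint _ S hdisj
  have haP : a ∈ P := hle (Ideal.mem_span_singleton_self a)
  have hPmax : P.IsMaximal := hdim P hP (fun h0 => ha (by simpa [h0, Ideal.mem_bot] using haP))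
  have hrP : r ∉ P := fun hrP => Set.disjoint_left.mp hPd hrP ⟨1, 0, by ring⟩
  obtain ⟨y, i, hiP, hy⟩ := hPmax.exists_inv hrP
  have : 1 - r * y ∈ P := by
    have : 1 - r * y = i := by linear_combination -hy
    rwa [this]
  exact Set.disjoint_left.mp hPd this ⟨0, y, by ring⟩

theorem key2 (A : Type*) [CommRing A] (r y a : A) (m : ℕ)
    (h : r ^ m * (1 - r * y) ∈ Ideal.span {a}) :
    ∀ k, r ^ m * (1 - (r * y) ^ k) ∈ Ideal.span {a} := by
  intro k
  induction k with
  | zero => simp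
  | succ k ih =>
    have : r ^ m * (1 - (r * y) ^ (k + 1)) =
        r ^ m * (1 - r * y) + r * y * (r ^ m * (1 - (r * y) ^ k)) := by ring
    rw [this]
    exact Ideal.add_mem _ h (Ideal.mul_mem_left _ _ ih)

theorem stmt_3 (A : Type*) [CommRing A] [IsDomain A]
    (hdim : ∀ P : Ideal A, P.IsPrime → P ≠ ⊥ → P.IsMaximal) :
    PropertyPlus A := by
  intro r a ha
  obtain ⟨n, y, hny⟩ := key A hdim r a ha
  refine ⟨1 - (r * y) ^ (n + 1), ?_, ?_⟩
  · intro M hM haM hrM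
    have hmem : r ^ (n+1) * (1 - (r * y) ^ (n+1)) ∈ M :=
      ((Ideal.span_singleton_le_iff_mem M).mpr haM) (key2 A r y a (n+1) hny (n+1))
    rcases hM.isPrime.mem_or_mem hmem with h1 | h1
    · exact absurd (hM.isPrime.mem_of_pow_mem _ h1) hrM
    · exact h1
  · intro M hM hrM hd
    have : (r * y) ^ (n + 1) ∈ M := Ideal.pow_mem_of_mem M (Ideal.mul_mem_right _ _ hrM) _ (by omega)
    have h1 : (1 : A) ∈ M := by
      have := Ideal.add_mem M hd this
      simpa using this
    exact hM.ne_top (Ideal.eq_top_of_unit_mem M 1 1 h1 (by ring))
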